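/- arXiv:1604.06673 — 4 statements merged into one kernel-verified Lean document; each statement's English description precedes it below -/
import Mathlib

section
/- Two distinct fibers are disjoint: if u, v ∈ ℝ⁴ \ {0} and K(u) ≠ K(v), then the sets {R(ϑ)u : ϑ ∈ ℝ} and {R(ϑ)v : ϑ ∈ ℝ} are disjoint. -/
open Matrix Real

/-- The KS matrix `L(u)`. -/
noncomputable def KSL (u : EuclideanSpace ℝ (Fin 4)) : Matrix (Fin 4) (Fin 4) ℝ :=
  !![u 0, -u 1, -u 2, u 3;
     u 1,  u 0, -u 3, -u 2;
     u 2,  u 3,  u 0,  u 1;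
     u 3, -u 2,  u 1, -u 0]

/-- The KS map `K(u) = L(u) u`. -/
noncomputable def KSmap (u : EuclideanSpace ℝ (Fin 4)) : EuclideanSpace ℝ (Fin 4) :=
  WithLp.toLp 2 ((KSL u).mulVec u)

/-- The fiber rotation matrix `R(ϑ)`. -/
noncomputable def KSR (θ : ℝ) : Matrix (Fin 4) (Fin 4) ℝ :=
  !![Real.cos θ, 0, 0, -Real.sin θ;
     0, Real.cos θ, Real.sin θ, 0;
     0, -Real.sin θ, Real.cos θ, 0;
     Real.sin θ, 0, 0, Real.cos θ]

/-- The bilinear relation `ℓ(u,w) = u₁w₄ - u₂w₃ + u₃w₂ - u₄w₁`. -/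
noncomputable def KSbilin (u w : EuclideanSpace ℝ (Fin 4)) : ℝ :=
  u 0 * w 3 - u 1 * w 2 + u 2 * w 1 - u 3 * w 0


lemma KSmap_rot (θ : ℝ) (u : EuclideanSpace ℝ (Fin 4)) :
    KSmap (WithLp.toLp 2 ((KSR θ).mulVec u)) = KSmap u := by
  have h := Real.sin_sq_add_cos_sq θ
  ext i
  fin_cases i <;>
      simp [KSmap, KSL, KSR, mulVec, dotProduct, Fin.sum_univ_four]
  · linear_combination (u 0 ^ 2 - u 1 ^ 2 - u 2 ^ 2 + u 3 ^ 2) * h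
  · linear_combination (2 * u 0 * u 1 - 2 * u 2 * u 3) * h
  · linear_combination (2 * u 0 * u 2 + 2 * u 1 * u 3) * h
  · ring

theorem ks_distinct_fibers_disjoint (u v : EuclideanSpace ℝ (Fin 4))
    (hu : u ≠ 0) (hv : v ≠ 0) (hK : KSmap u ≠ KSmap v) :
    Disjoint {w : EuclideanSpace ℝ (Fin 4) | ∃ θ : ℝ, w = (KSR θ).mulVec u}
      {w : EuclideanSpace ℝ (Fin 4) | ∃ θ : ℝ, w = (KSR θ).mulVec v} := by
  rw [Set.disjoint_left]
  rintro w ⟨θ₁, h1⟩ ⟨θ₂, hw⟩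
  apply hK
  have e1 : w = WithLp.toLp 2 ((KSR θ₁).mulVec u) := by rw [← h1]
  have e2 : w = WithLp.toLp 2 ((KSR θ₂).mulVec v) := by rw [← hw]
  rw [← KSmap_rot θ₁ u, ← e1, e2, KSmap_rot]
end

section
/- If K(u) = K(w) for nonzero u, w ∈ ℝ⁴, then there exists an angle ϑ such that w = R(ϑ)u; that is, the preimage of any point under the KS map is exactly one fiber. -/
open Matrix Real

/-- Scalar core of the fiber theorem. -/
theorem ks_aux (u0 u1 u2 u3 w0 w1 w2 w3 : ℝ)
    (h0 : u0*u0 - u1*u1 - u2*u2 + u3*u3 = w0*w0 - w1*w1 - w2*w2 + w3*w3)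
    (h1 : u0*u1 - u2*u3 = w0*w1 - w2*w3)
    (h2 : u0*u2 + u1*u3 = w0*w2 + w1*w3)
    (hs : 0 < u0^2 + u1^2 + u2^2 + u3^2) :
    ∃ θ : ℝ, w0 = Real.cos θ * u0 - Real.sin θ * u3 ∧
             w1 = Real.cos θ * u1 + Real.sin θ * u2 ∧
             w2 = - Real.sin θ * u1 + Real.cos θ * u2 ∧
             w3 = Real.sin θ * u0 + Real.cos θ * u3 := by
  set s : ℝ := u0^2 + u1^2 + u2^2 + u3^2 with hsdef
  have hq : (u0^2+u3^2) * (u1^2+u2^2) = (w0^2+w3^2) * (w1^2+w2^2) := by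
    linear_combination (u0*u1 - u2*u3 + w0*w1 - w2*w3) * h1 + (u0*u2+u1*u3 + w0*w2+w1*w3) * h2
  have h4 : ((u0^2+u3^2) + (u1^2+u2^2))^2 = ((w0^2+w3^2) + (w1^2+w2^2))^2 := by
    linear_combination ((u0^2+u3^2) - (u1^2+u2^2) + (w0^2+w3^2) - (w1^2+w2^2)) * h0 + 4 * hq
  have hsum : (u0^2+u3^2) + (u1^2+u2^2) = (w0^2+w3^2) + (w1^2+w2^2) := by
    have h5 : (((u0^2+u3^2) + (u1^2+u2^2)) - ((w0^2+w3^2) + (w1^2+w2^2))) *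
        (((u0^2+u3^2) + (u1^2+u2^2)) + ((w0^2+w3^2) + (w1^2+w2^2))) = 0 := by
      linear_combination h4
    rcases mul_eq_zero.mp h5 with h6 | h6
    · linarith
    · nlinarith [sq_nonneg u0, sq_nonneg u1, sq_nonneg u2, sq_nonneg u3,
        sq_nonneg w0, sq_nonneg w1, sq_nonneg w2, sq_nonneg w3]
  have hx : u0^2+u3^2 = w0^2+w3^2 := by linarith
  have hy : u1^2+u2^2 = w1^2+w2^2 := by linarith
  have hssum : s = w0^2+w1^2+w2^2+w3^2 := by linarith
  set cr : ℝ := w0*u0 + w3*u3 + w1*u1 + w2*u2 with hcr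
  set ci : ℝ := w3*u0 - w0*u3 + w1*u2 - w2*u1 with hci
  have r0 : cr * u0 - ci * u3 = s * w0 := by linear_combination w1 * h1 + w2 * h2 - w0 * hy
  have r1 : cr * u1 + ci * u2 = s * w1 := by linear_combination w0 * h1 + w3 * h2 - w1 * hx
  have r2 : cr * u2 - ci * u1 = s * w2 := by linear_combination w0 * h2 - w3 * h1 - w2 * hx
  have r3 : cr * u3 + ci * u0 = s * w3 := by linear_combination w1 * h2 - w2 * h1 - w3 * hy
  have e1 : s^2 * (w0^2+w3^2) = (cr^2+ci^2) * (u0^2+u3^2) := by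
    linear_combination (-(cr*u0 - ci*u3 + s*w0)) * r0 + (-(cr*u3 + ci*u0 + s*w3)) * r3
  have e2 : s^2 * (w1^2+w2^2) = (cr^2+ci^2) * (u1^2+u2^2) := by
    linear_combination (-(cr*u1 + ci*u2 + s*w1)) * r1 + (-(cr*u2 - ci*u1 + s*w2)) * r2
  have habs : cr^2 + ci^2 = s^2 := by
    have e3 : (cr^2+ci^2) * s = s^2 * s := by linear_combination -e1 - e2 - s^2 * hssum
    exact mul_right_cancel₀ (ne_of_gt hs) e3
  set z : ℂ := ⟨cr, ci⟩ with hz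
  have hnsq : Complex.normSq z = s^2 := by
    rw [hz, Complex.normSq_mk]; linear_combination habs
  have hzabs : ‖z‖ = s := by
    rw [Complex.norm_def, hnsq, Real.sqrt_sq hs.le]
  have hzne : z ≠ 0 := by
    intro hzz; rw [hzz] at hzabs; simp at hzabs; linarith
  have hcos : Real.cos z.arg = cr / s := by
    rw [Complex.cos_arg hzne, hzabs]
  have hsin : Real.sin z.arg = ci / s := by
    rw [Complex.sin_arg, hzabs]
  obtain ⟨θ, hc, hsn⟩ : ∃ θ, Real.cos θ = cr / s ∧ Real.sin θ = ci / s := ⟨z.arg, hcos, hsin⟩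
  clear_value s cr ci
  have hs' : s ≠ 0 := ne_of_gt hs
  refine ⟨θ, ?_, ?_, ?_, ?_⟩ <;> rw [hc, hsn] <;> field_simp
  · linear_combination -r0
  · linear_combination -r1
  · linear_combination -r2
  · linear_combination -r3
theorem ks_preimage_is_fiber (u w : EuclideanSpace ℝ (Fin 4))
    (hu : u ≠ 0) (hw : w ≠ 0) (h : KSmap u = KSmap w) :
    ∃ θ : ℝ, w = (WithLp.toLp 2 ((KSR θ).mulVec u) : EuclideanSpace ℝ (Fin 4)) := by
  have h0 := congrFun (congrArg WithLp.ofLp h) 0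
  have h1 := congrFun (congrArg WithLp.ofLp h) 1
  have h2 := congrFun (congrArg WithLp.ofLp h) 2
  simp [KSmap, KSL, Matrix.mulVec, dotProduct, Fin.sum_univ_four] at h0 h1 h2
  have hs : 0 < u 0 ^ 2 + u 1 ^ 2 + u 2 ^ 2 + u 3 ^ 2 := by
    obtain ⟨i, hi⟩ := Function.ne_iff.mp (fun (h' : u.ofLp = (0 : EuclideanSpace ℝ (Fin 4)).ofLp) => hu (WithLp.ofLp_injective 2 h'))
    fin_cases i <;> simp at hi <;>
      nlinarith [sq_nonneg (u 0), sq_nonneg (u 1), sq_nonneg (u 2), sq_nonneg (u 3),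
        sq_pos_of_ne_zero hi]
  obtain ⟨θ, e0, e1, e2, e3⟩ := ks_aux (u 0) (u 1) (u 2) (u 3) (w 0) (w 1) (w 2) (w 3)
    (by linarith) (by linarith) (by linarith) hs
  refine ⟨θ, WithLp.ofLp_injective 2 (funext fun i => ?_)⟩
  fin_cases i <;>
    simp [KSR, Matrix.mulVec, dotProduct, Fin.sum_univ_four] <;>
    linarith [e0, e1, e2, e3]
end

section
/- (Conservation of the fiber angle) Let u : ℝ → ℝ⁴ and w : ℝ → ℝ⁴ be differentiable curves with ‖u(s)‖² > 0 for all s, satisfying the bilinear integrals ℓ(u(s), u'(s)) = 0 and ℓ(w(s), w'(s)) = 0 for all s. Suppose w(s) = R(ϑ(s))u(s) for a differentiable function ϑ. Then ϑ'(s) = 0 for all s, so ϑ is constant. -/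
open Matrix Real

private lemma KS_comp_hasDerivAt (f : ℝ → EuclideanSpace ℝ (Fin 4)) (hf : Differentiable ℝ f)
    (i : Fin 4) (s : ℝ) : HasDerivAt (fun t => f t i) (deriv f s i) s := by
  have h := (hf s).hasDerivAt
  exact (EuclideanSpace.proj i).hasFDerivAt.comp_hasDerivAt s h

theorem ks_fiber_angle_conserved (u w : ℝ → EuclideanSpace ℝ (Fin 4)) (ϑ : ℝ → ℝ)
    (hu : Differentiable ℝ u) (hw : Differentiable ℝ w) (hϑ : Differentiable ℝ ϑ)
    (hr : ∀ s, ‖u s‖ ^ 2 > 0)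
    (hℓu : ∀ s, KSbilin (u s) (deriv u s) = 0)
    (hℓw : ∀ s, KSbilin (w s) (deriv w s) = 0)
    (hfib : ∀ s, w s = (WithLp.toLp 2 ((KSR (ϑ s)).mulVec (u s)) : EuclideanSpace ℝ (Fin 4))) :
    (∀ s, deriv ϑ s = 0) ∧ ∀ s₁ s₂, ϑ s₁ = ϑ s₂ := by
  have key : ∀ s, deriv ϑ s = 0 := by
    intro s
    have hw0 : ∀ t, w t 0 = cos (ϑ t) * u t 0 - sin (ϑ t) * u t 3 := by
      intro t; rw [hfib t]
      simp [KSR, Matrix.mulVec, dotProduct, Fin.sum_univ_four]; ring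
    have hw1 : ∀ t, w t 1 = cos (ϑ t) * u t 1 + sin (ϑ t) * u t 2 := by
      intro t; rw [hfib t]
      simp [KSR, Matrix.mulVec, dotProduct, Fin.sum_univ_four]
    have hw2 : ∀ t, w t 2 = cos (ϑ t) * u t 2 - sin (ϑ t) * u t 1 := by
      intro t; rw [hfib t]
      simp [KSR, Matrix.mulVec, dotProduct, Fin.sum_univ_four]; ring
    have hw3 : ∀ t, w t 3 = sin (ϑ t) * u t 0 + cos (ϑ t) * u t 3 := by
      intro t; rw [hfib t]
      simp [KSR, Matrix.mulVec, dotProduct, Fin.sum_univ_four]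
    set c := cos (ϑ s) with hc
    set n := sin (ϑ s) with hn
    set p := deriv ϑ s with hp
    have hϑd : HasDerivAt ϑ p s := (hϑ s).hasDerivAt
    have hcos : HasDerivAt (fun t => cos (ϑ t)) (-n * p) s := by
      exact (Real.hasDerivAt_cos (ϑ s)).comp s hϑd
    have hsin : HasDerivAt (fun t => sin (ϑ t)) (c * p) s := by
      exact (Real.hasDerivAt_sin (ϑ s)).comp s hϑd
    have hu0 := KS_comp_hasDerivAt u hu 0 s
    have hu1 := KS_comp_hasDerivAt u hu 1 s
    have hu2 := KS_comp_hasDerivAt u hu 2 s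
    have hu3 := KS_comp_hasDerivAt u hu 3 s
    set a0 := u s 0; set a1 := u s 1; set a2 := u s 2; set a3 := u s 3
    set b0 := deriv u s 0; set b1 := deriv u s 1; set b2 := deriv u s 2; set b3 := deriv u s 3
    have dw0 : deriv w s 0 = (-n * p) * a0 + c * b0 - ((c * p) * a3 + n * b3) := by
      have h : HasDerivAt (fun t => w t 0) ((-n * p) * a0 + c * b0 - ((c * p) * a3 + n * b3)) s := by
        refine ((hcos.mul hu0).sub (hsin.mul hu3)).congr_of_eventuallyEq ?_
        filter_upwards with t using hw0 t
      exact (KS_comp_hasDerivAt w hw 0 s).unique h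
    have dw1 : deriv w s 1 = (-n * p) * a1 + c * b1 + ((c * p) * a2 + n * b2) := by
      have h : HasDerivAt (fun t => w t 1) ((-n * p) * a1 + c * b1 + ((c * p) * a2 + n * b2)) s := by
        refine ((hcos.mul hu1).add (hsin.mul hu2)).congr_of_eventuallyEq ?_
        filter_upwards with t using hw1 t
      exact (KS_comp_hasDerivAt w hw 1 s).unique h
    have dw2 : deriv w s 2 = (-n * p) * a2 + c * b2 - ((c * p) * a1 + n * b1) := by
      have h : HasDerivAt (fun t => w t 2) ((-n * p) * a2 + c * b2 - ((c * p) * a1 + n * b1)) s := by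
        refine ((hcos.mul hu2).sub (hsin.mul hu1)).congr_of_eventuallyEq ?_
        filter_upwards with t using hw2 t
      exact (KS_comp_hasDerivAt w hw 2 s).unique h
    have dw3 : deriv w s 3 = ((c * p) * a0 + n * b0) + ((-n * p) * a3 + c * b3) := by
      have h : HasDerivAt (fun t => w t 3) (((c * p) * a0 + n * b0) + ((-n * p) * a3 + c * b3)) s := by
        refine ((hsin.mul hu0).add (hcos.mul hu3)).congr_of_eventuallyEq ?_
        filter_upwards with t using hw3 t
      exact (KS_comp_hasDerivAt w hw 3 s).unique h
    have hpyth : c ^ 2 + n ^ 2 = 1 := by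
      rw [hc, hn]; exact Real.cos_sq_add_sin_sq (ϑ s)
    have hLu : a0 * b3 - a1 * b2 + a2 * b1 - a3 * b0 = 0 := hℓu s
    have hLw := hℓw s
    rw [KSbilin] at hLw
    rw [hw0 s, hw1 s, hw2 s, hw3 s, dw0, dw1, dw2, dw3] at hLw
    have hkey : (a0 ^ 2 + a1 ^ 2 + a2 ^ 2 + a3 ^ 2) * p = 0 := by
      linear_combination hLw -
        ((a0 ^ 2 + a1 ^ 2 + a2 ^ 2 + a3 ^ 2) * p + (a0 * b3 - a1 * b2 + a2 * b1 - a3 * b0)) * hpyth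
        - hLu
    have hnorm : ‖u s‖ ^ 2 = a0 ^ 2 + a1 ^ 2 + a2 ^ 2 + a3 ^ 2 := by
      rw [EuclideanSpace.norm_eq, Real.sq_sqrt (by positivity)]
      simp [Fin.sum_univ_four, sq_abs]
      rfl
    have hpos : a0 ^ 2 + a1 ^ 2 + a2 ^ 2 + a3 ^ 2 > 0 := by rw [← hnorm]; exact hr s
    exact (mul_eq_zero.1 hkey).resolve_left (ne_of_gt hpos)
  exact ⟨key, fun s₁ s₂ => is_const_of_deriv_eq_zero hϑ key s₁ s₂⟩
end

section
/- For x = (x₁,x₂,x₃) with r = ‖x‖ and x₁ ≥ 0, r > 0, set R² = (r + x₁)/2 and define v(θ) = (R sinθ, (x₂ sinθ - x₃ cosθ)/(2R), (x₂ cosθ + x₃ sinθ)/(2R), -R cosθ). Then K(v(θ)) = (x₁, x₂, x₃, 0) for every θ; i.e. the explicit inverse map lands in the correct fiber. -/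
open Matrix Real

theorem ks_inverse_map_in_fiber (x₁ x₂ x₃ r R θ : ℝ)
    (hr : r = Real.sqrt (x₁ ^ 2 + x₂ ^ 2 + x₃ ^ 2))
    (hx : 0 ≤ x₁) (hrpos : 0 < r)
    (hR : R = Real.sqrt ((r + x₁) / 2)) :
    KSmap (WithLp.toLp 2 ![R * Real.sin θ, (x₂ * Real.sin θ - x₃ * Real.cos θ) / (2 * R),
        (x₂ * Real.cos θ + x₃ * Real.sin θ) / (2 * R), -R * Real.cos θ] :
      EuclideanSpace ℝ (Fin 4)) = (WithLp.toLp 2 ![x₁, x₂, x₃, 0] : EuclideanSpace ℝ (Fin 4)) := by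
  have hrx : 0 < r + x₁ := by linarith
  have hR2 : R ^ 2 = (r + x₁) / 2 := by
    rw [hR, Real.sq_sqrt]; linarith
  have hRpos : 0 < R := by
    rw [hR]; exact Real.sqrt_pos.mpr (by linarith)
  have hr2 : r ^ 2 = x₁ ^ 2 + x₂ ^ 2 + x₃ ^ 2 := by
    rw [hr, Real.sq_sqrt]; positivity
  have hsc := Real.sin_sq_add_cos_sq θ
  have hRne : R ≠ 0 := ne_of_gt hRpos
  ext i
  fin_cases i <;>
    simp [KSmap, KSL, Matrix.mulVec, dotProduct, Fin.sum_univ_four] <;>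
    field_simp
  · linear_combination (4*R^2*R^2 - x₂^2 - x₃^2)*hsc + (2*R^2+r-x₁)*(2*hR2) + hr2
  · linear_combination (2*x₂)*hsc
  · linear_combination (2*x₃)*hsc
  · ring
end
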